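/- Fix a positive integer d and v ∈ I(d). Let β > γ be (not necessarily consecutive) elements of a v-chain C, and let E be a strictly decreasing chain (under >) of elements of 𝔖_C with last element q_{C,γ} and of length odepth_C(γ). Then q_{C,β} occurs in E. -/

import Mathlib

namespace OG

/-- `star d k = k* = 2d+1-k`. -/
def star (d k : ℕ) : ℕ := 2 * d + 1 - k

/-- `I(d,2d)`: the set of `d`-element subsets of `{1,…,2d}`. -/
def Idn (d : ℕ) : Set (Finset ℕ) :=
  {v | v.card = d ∧ ∀ k ∈ v, 1 ≤ k ∧ k ≤ 2 * d}

/-- The partial order on `I(d,2d)`: entrywise comparison of increasing enumerations. -/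
def leI (x y : Finset ℕ) : Prop :=
  List.Forall₂ (· ≤ ·) (x.sort (· ≤ ·)) (y.sort (· ≤ ·))

/-- `I(d)`: elements of `I(d,2d)` containing exactly one of `k`, `k*` for each `k`,
with evenly many entries exceeding `d`. -/
def Iset (d : ℕ) : Set (Finset ℕ) :=
  {v | v ∈ Idn d ∧ (∀ k, 1 ≤ k → k ≤ 2 * d → (k ∈ v ↔ star d k ∉ v)) ∧
       Even ((v.filter (fun k => d < k)).card)}

/-- membership in `N(v)`. -/
def inN (d : ℕ) (v : Finset ℕ) (p : ℕ × ℕ) : Prop :=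
  1 ≤ p.1 ∧ p.1 ≤ 2 * d ∧ 1 ≤ p.2 ∧ p.2 ≤ 2 * d ∧ p.1 ∉ v ∧ p.2 ∈ v ∧ p.2 < p.1

/-- membership in `OR(v)`. -/
def inOR (d : ℕ) (v : Finset ℕ) (p : ℕ × ℕ) : Prop :=
  1 ≤ p.1 ∧ p.1 ≤ 2 * d ∧ 1 ≤ p.2 ∧ p.2 ≤ 2 * d ∧ p.1 ∉ v ∧ p.2 ∈ v ∧ p.1 < star d p.2

/-- membership in `ON(v) = OR(v) ∩ N(v)`. -/
def inON (d : ℕ) (v : Finset ℕ) (p : ℕ × ℕ) : Prop := inN d v p ∧ inOR d v p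

/-- membership in the diagonal `D(v)`. -/
def inDiag (d : ℕ) (v : Finset ℕ) (p : ℕ × ℕ) : Prop :=
  p.1 ∉ v ∧ p.2 ∈ v ∧ p.1 = star d p.2

instance (d : ℕ) (v : Finset ℕ) : DecidablePred (inN d v) := fun p => by
  unfold inN; infer_instance

instance (d : ℕ) (v : Finset ℕ) : DecidablePred (inOR d v) := fun p => by
  unfold inOR; infer_instance

instance (d : ℕ) (v : Finset ℕ) : DecidablePred (inON d v) := fun p => by
  unfold inON; infer_instance

instance (d : ℕ) (v : Finset ℕ) : DecidablePred (inDiag d v) := fun p => by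
  unfold inDiag; infer_instance

/-- `(R,C) > (r,c)` iff `R > r` and `C < c`. -/
def pgt (A B : ℕ × ℕ) : Prop := B.1 < A.1 ∧ A.2 < B.2

instance : DecidableRel pgt := fun A B => by unfold pgt; infer_instance

/-- `(R,C)` dominates `(r,c)` iff `R ≥ r` and `C ≤ c`. -/
def pdom (A B : ℕ × ℕ) : Prop := B.1 ≤ A.1 ∧ A.2 ≤ B.2

/-- vertical projection `p_v(r,c) = (c*,c)`. -/
def pv (d : ℕ) (α : ℕ × ℕ) : ℕ × ℕ := (star d α.2, α.2)

/-- horizontal projection `p_h(r,c) = (r,r*)`. -/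
def ph (d : ℕ) (α : ℕ × ℕ) : ℕ × ℕ := (α.1, star d α.1)

/-- `(r,c)^# = (c*,r*)`. -/
def hash (d : ℕ) (α : ℕ × ℕ) : ℕ × ℕ := (star d α.2, star d α.1)

/-- A `v`-chain: a strictly decreasing (under `pgt`) list of elements of `ON(v)`. -/
def IsVChain (d : ℕ) (v : Finset ℕ) (C : List (ℕ × ℕ)) : Prop :=
  C.Chain' pgt ∧ ∀ α ∈ C, inON d v α

/-- Two consecutive elements `(r,c) > (R,C)` of a `v`-chain are connected
if `r* ≥ C` and `R > r*`. -/
def Connected (d : ℕ) (α β : ℕ × ℕ) : Prop :=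
  β.2 ≤ star d α.1 ∧ star d α.1 < β.1

instance (d : ℕ) : ∀ α β, Decidable (Connected d α β) := fun α β => by
  unfold Connected; infer_instance

/-- The connected components of a `v`-chain. -/
def components (d : ℕ) (C : List (ℕ × ℕ)) : List (List (ℕ × ℕ)) :=
  C.splitBy (fun a b => decide (Connected d a b))

/-- The three possible types of an element of a `v`-chain. -/
inductive VType | V | H | S
deriving DecidableEq

/-- The type of an element `α` of a `v`-chain `C`: type V if `α` is not the last element
of its connected component or that component has even cardinality; otherwise type H if
`p_h(α) ∈ N(v)` (i.e. `r > r*`) and type S if not. -/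
def typeOf (d : ℕ) (C : List (ℕ × ℕ)) (α : ℕ × ℕ) : VType :=
  match (components d C).find? (fun g => decide (α ∈ g)) with
  | some g =>
      if g.getLast? = some α ∧ Odd g.length then
        (if star d α.1 < α.1 then VType.H else VType.S)
      else VType.V
  | none => VType.V

/-- `𝔖_{C,α}`. -/
def SCa (d : ℕ) (C : List (ℕ × ℕ)) (α : ℕ × ℕ) : Multiset (ℕ × ℕ) :=
  match typeOf d C α with
  | VType.V => {pv d α}
  | VType.H => {pv d α, ph d α}
  | VType.S => {α, hash d α}

/-- `𝔖_C`: the multiset union of the `𝔖_{C,α}` over `α ∈ C`. -/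
def SC (d : ℕ) (C : List (ℕ × ℕ)) : Multiset (ℕ × ℕ) :=
  (C.map (fun α => SCa d C α)).sum

/-- `q_{C,α}`. -/
def qCa (d : ℕ) (C : List (ℕ × ℕ)) (α : ℕ × ℕ) : ℕ × ℕ :=
  match typeOf d C α with
  | VType.S => α
  | _ => pv d α

/-- A strictly decreasing chain of elements of the monomial `S`. -/
def IsChainIn (S : Multiset (ℕ × ℕ)) (L : List (ℕ × ℕ)) : Prop :=
  L.Chain' pgt ∧ ∀ β ∈ L, β ∈ S

/-- The depth of `α` in a monomial `S` of `N(v)`: the maximal length of a strictly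
decreasing chain of elements of `S` ending at `α`. -/
noncomputable def depth (S : Multiset (ℕ × ℕ)) (α : ℕ × ℕ) : ℕ :=
  sSup {k | ∃ L, IsChainIn S L ∧ L.getLast? = some α ∧ L.length = k}

/-- The o-depth of `α` in a `v`-chain `C`: the depth of `q_{C,α}` in `𝔖_C`. -/
noncomputable def odepthC (d : ℕ) (C : List (ℕ × ℕ)) (α : ℕ × ℕ) : ℕ :=
  depth (SC d C) (qCa d C α)

/-- The o-depth of `α` in a monomial `S` of `ON(v)`: the maximum of `odepthC` over
all `v`-chains in `S` containing `α`. -/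
noncomputable def odepthM (d : ℕ) (v : Finset ℕ) (S : Multiset (ℕ × ℕ)) (α : ℕ × ℕ) : ℕ :=
  sSup {k | ∃ C, IsVChain d v C ∧ (∀ β ∈ C, β ∈ S) ∧ α ∈ C ∧ odepthC d C α = k}

/-- A distinguished subset of `N(v)`. -/
def Distinguished (d : ℕ) (v : Finset ℕ) (S : Finset (ℕ × ℕ)) : Prop :=
  (∀ p ∈ S, inN d v p) ∧
  ∀ A ∈ S, ∀ B ∈ S, A ≠ B →
    A.1 ≠ B.1 ∧ A.2 ≠ B.2 ∧ (B.1 < A.1 → (B.1 < A.2 ∨ A.2 < B.2))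

/-- The element of `I(d,2d)` attached to a distinguished subset `S` of `N(v)`:
remove from `v` the column indices of elements of `S` and add their row indices. -/
def toW (v : Finset ℕ) (S : Finset (ℕ × ℕ)) : Finset ℕ :=
  (v \ S.image Prod.snd) ∪ S.image Prod.fst

/-- `w(C) = w_C`, the element of `I(d,2d)` attached to the `v`-chain `C` via the
distinguished subset `𝔖_C`. -/
def wC (d : ℕ) (v : Finset ℕ) (C : List (ℕ × ℕ)) : Finset ℕ :=
  toW v (SC d C).toFinset

/-- `w` ortho-dominates a monomial `S` in `ON(v)`: `w ≥ w(C)` for every `v`-chain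
`C` contained in `S`. -/
def ODominates (d : ℕ) (v w : Finset ℕ) (S : Multiset (ℕ × ℕ)) : Prop :=
  ∀ C : List (ℕ × ℕ), IsVChain d v C → (∀ β ∈ C, β ∈ S) → leI (wC d v C) w

/-- `x` dominates a monomial `S` in `N(v)` (in the sense of the Grassmannian case):
`x ≥ w_L` for every strictly decreasing chain `L` contained in `S`. -/
def Dominates (d : ℕ) (v x : Finset ℕ) (S : Multiset (ℕ × ℕ)) : Prop :=
  ∀ L : List (ℕ × ℕ), L.Chain' pgt → (∀ β ∈ L, β ∈ S) → leI (toW v L.toFinset) x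

/-- The `v`-degree of `θ`: half the cardinality of `v \ θ`. -/
def vdeg (v θ : Finset ℕ) : ℕ := (v \ θ).card / 2

/-- the element next to `α` in the list `C`. -/
def nextInC (C : List (ℕ × ℕ)) (α : ℕ × ℕ) : Option (ℕ × ℕ) :=
  C[C.idxOf α + 1]?

/-- The critical element of a `v`-chain: its first element whose horizontal projection
does not belong to `N(v)` (i.e. with `r ≤ r*`). -/
def critical (d : ℕ) (C : List (ℕ × ℕ)) : Option (ℕ × ℕ) :=
  C.find? (fun x => decide (x.1 ≤ star d x.1))

/-- `α` is the last element of its connected component in `C`. -/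
def isCompLast (d : ℕ) (C : List (ℕ × ℕ)) (α : ℕ × ℕ) : Prop :=
  ∃ g ∈ components d C, g.getLast? = some α

/-- The condition (*): `α` has type H in `C` and `p_h(α) ≯ β'` for some `β' ∈ 𝔖_{C,β}`. -/
def starCond (d : ℕ) (C : List (ℕ × ℕ)) (α β : ℕ × ℕ) : Prop :=
  typeOf d C α = VType.H ∧ ∃ β' ∈ SCa d C β, ¬ pgt (ph d α) β'

/-- A standard monomial in `I(d)`: a weakly decreasing sequence of elements of `I(d)`. -/
def IsStdMon (d : ℕ) (L : List (Finset ℕ)) : Prop :=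
  (∀ θ ∈ L, θ ∈ Iset d) ∧ L.Chain' (fun a b => leI b a)

/-- A standard monomial is `w`-dominated if `w ≥ θ₁`. -/
def WDominated (w : Finset ℕ) (L : List (Finset ℕ)) : Prop :=
  ∀ θ, L.head? = some θ → leI θ w

/-- A standard monomial is `v`-compatible if each member is comparable with `v`
and distinct from `v`. -/
def VCompatible (v : Finset ℕ) (L : List (Finset ℕ)) : Prop :=
  ∀ θ ∈ L, θ ≠ v ∧ (leI θ v ∨ leI v θ)

/-- The degree of a standard monomial: the sum of the `v`-degrees of its members. -/
def stdDeg (v : Finset ℕ) (L : List (Finset ℕ)) : ℕ :=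
  (L.map (fun θ => vdeg v θ)).sum

end OG

namespace OGaux
open OG List

variable {α : Type*}

theorem pgt_trans {a b c : ℕ × ℕ} (h1 : pgt a b) (h2 : pgt b c) : pgt a c :=
  ⟨lt_trans h2.1 h1.1, lt_trans h1.2 h2.2⟩

instance : IsTrans (ℕ × ℕ) pgt := ⟨fun _ _ _ => pgt_trans⟩

theorem pgt_irrefl (a : ℕ × ℕ) : ¬ pgt a a := fun h => lt_irrefl _ h.1

theorem pgt_asymm {a b : ℕ × ℕ} (h : pgt a b) : ¬ pgt b a :=
  fun h' => lt_irrefl _ (lt_trans h.1 h'.1)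

/-- boundary relation between groups -/
def Bnd (R : α → α → Bool) (h h' : List α) : Prop :=
  ∀ x y, h.getLast? = some x → h'.head? = some y → R x y = false

theorem splitBy_loop_acc (R : α → α → Bool) (as : List α) :
    ∀ (ag : α) (g : List α) (gs : List (List α)),
    splitBy.loop R as ag g gs = gs.reverse ++ splitBy.loop R as ag g [] := by
  induction as with
  | nil => intro ag g gs; simp [splitBy.loop]
  | cons a as ih =>
    intro ag g gs
    cases hR : R ag a <;> simp only [splitBy.loop, hR]
    · rw [ih a [] ((ag::g).reverse :: gs), ih a [] [(ag::g).reverse]]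
      simp
    · exact ih _ _ _

theorem splitBy_loop_spec (R : α → α → Bool) (as : List α) : ∀ (ag : α) (g : List α),
    Chain' (fun a b => R a b = true) (g.reverse ++ [ag]) →
    ∃ g₁ gs, splitBy.loop R as ag g [] = (g.reverse ++ ag :: g₁) :: gs ∧
      ((g.reverse ++ ag :: g₁) :: gs).flatten = g.reverse ++ ag :: as ∧
      (∀ h ∈ (g.reverse ++ ag :: g₁) :: gs, h ≠ [] ∧ Chain' (fun a b => R a b = true) h) ∧
      Chain' (Bnd R) ((g.reverse ++ ag :: g₁) :: gs) := by
  induction as with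
  | nil =>
    intro ag g hch
    refine ⟨[], [], ?_, by simp, ?_, ?_⟩
    · simp [splitBy.loop]
    · intro h hh
      simp only [mem_singleton] at hh
      subst hh
      exact ⟨by simp, by simpa using hch⟩
    · simp [List.Chain', List.isChain_singleton]
  | cons a as ih =>
    intro ag g hch
    cases hR : R ag a <;> simp only [splitBy.loop, hR]
    · -- new group starts
      have hch1 : Chain' (fun a b => R a b = true) ([].reverse ++ [a]) := by simp [List.Chain']
      obtain ⟨g₁, gs, h1, h2, h3, h4⟩ := ih a [] hch1
      simp only [List.nil_append, List.reverse_nil] at h1 h2 h3 h4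
      refine ⟨[], (a :: g₁) :: gs, ?_, ?_, ?_, ?_⟩
      · rw [splitBy_loop_acc, h1]
        simp
      · simp only [List.flatten_cons] at h2 ⊢
        simp [h2]
      · intro h hh
        rcases List.mem_cons.1 hh with rfl | hh'
        · exact ⟨by simp, by simpa using hch⟩
        · exact h3 h hh'
      · refine List.isChain_cons_cons.2 ⟨?_, h4⟩
        intro x y hx hy
        simp only [List.getLast?_concat, List.head?_cons, Option.some.injEq] at hx hy
        subst hx; subst hy; exact hR
    · -- continue group
      have hch1 : Chain' (fun a b => R a b = true) ((ag :: g).reverse ++ [a]) := by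
        rw [List.reverse_cons, List.Chain', List.isChain_append]
        refine ⟨hch, by simp, ?_⟩
        intro x hx y hy
        simp only [List.getLast?_concat, List.head?_cons, Option.mem_def,
          Option.some.injEq] at hx hy
        subst hx; subst hy; exact hR
      obtain ⟨g₁, gs, h1, h2, h3, h4⟩ := ih a (ag :: g) hch1
      have e : (ag :: g).reverse ++ a :: g₁ = g.reverse ++ ag :: a :: g₁ := by simp
      have e2 : (ag :: g).reverse ++ a :: as = g.reverse ++ ag :: a :: as := by simp
      rw [e] at h1 h3 h4
      rw [e, e2] at h2
      exact ⟨a :: g₁, gs, h1, h2, h3, h4⟩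

theorem splitBy_spec (R : α → α → Bool) (l : List α) :
    (l.splitBy R).flatten = l ∧
    (∀ g ∈ l.splitBy R, g ≠ [] ∧ Chain' (fun a b => R a b = true) g) ∧
    Chain' (Bnd R) (l.splitBy R) := by
  cases l with
  | nil => refine ⟨rfl, by simp [List.splitBy], by simp [List.splitBy, List.Chain']⟩
  | cons a as =>
    have hch : Chain' (fun a b => R a b = true) (([] : List α).reverse ++ [a]) := by simp [List.Chain']
    obtain ⟨g₁, gs, h1, h2, h3, h4⟩ := splitBy_loop_spec R as a [] hch
    simp only [List.reverse_nil, List.nil_append] at h1 h2 h3 h4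
    have e : splitBy R (a :: as) = splitBy.loop R as a [] [] := rfl
    rw [e, h1]
    exact ⟨h2, h3, h4⟩

/-! ### components -/

theorem comps_flatten (d : ℕ) (C : List (ℕ × ℕ)) : (components d C).flatten = C :=
  (splitBy_spec _ _).1

theorem comps_groups {d : ℕ} {C : List (ℕ × ℕ)} {g : List (ℕ × ℕ)}
    (hg : g ∈ components d C) : g ≠ [] ∧ Chain' (fun a b => Connected d a b) g := by
  obtain ⟨h1, h2⟩ := (splitBy_spec _ C).2.1 g hg
  exact ⟨h1, h2.imp fun h => by simpa using h⟩

theorem comps_bnd (d : ℕ) (C : List (ℕ × ℕ)) :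
    Chain' (fun h h' => ∀ x y, h.getLast? = some x → h'.head? = some y →
      ¬ Connected d x y) (components d C) := by
  refine ((splitBy_spec _ C).2.2).imp ?_
  intro h h' hb x y hx hy
  have := hb x y hx hy
  simpa using this

theorem nodup_split_unique {a : α} {s₁ t₁ s₂ t₂ : List α}
    (hn : (s₁ ++ a :: t₁).Nodup) (h : s₁ ++ a :: t₁ = s₂ ++ a :: t₂) :
    s₁ = s₂ ∧ t₁ = t₂ := by
  have hat : a ∉ t₁ := by
    have : (a :: t₁).Nodup := hn.sublist (List.sublist_append_right _ _)
    exact (List.nodup_cons.1 this).1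
  have has : a ∉ s₁ := by
    have := List.disjoint_of_nodup_append hn
    exact fun hmem => this hmem (List.mem_cons_self)
  rcases List.append_eq_append_iff.1 h with ⟨u, hu1, hu2⟩ | ⟨u, hu1, hu2⟩
  · cases u with
    | nil => simp at hu1 hu2; exact ⟨hu1.symm, by simpa using hu2⟩
    | cons b u' =>
      exfalso
      obtain ⟨rfl, h2⟩ : a = b ∧ t₁ = u' ++ a :: t₂ := by
        have := hu2; simp at this; exact ⟨this.1, this.2⟩
      exact hat (h2 ▸ List.mem_append_right u' (List.mem_cons_self))
  · cases u with
    | nil => simp at hu1 hu2; exact ⟨hu1, by simpa using hu2.symm⟩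
    | cons b u' =>
      exfalso
      obtain ⟨rfl, -⟩ : a = b ∧ t₂ = u' ++ a :: t₁ := by
        have := hu2; simp at this; exact ⟨this.1, this.2⟩
      exact has (hu1 ▸ List.mem_append_right s₂ (List.mem_cons_self))

/-! ### chain facts -/

variable {d : ℕ} {v : Finset ℕ} {C : List (ℕ × ℕ)} {a b a' β γ : ℕ × ℕ}

theorem chain_pairwise (hC : IsVChain d v C) : C.Pairwise pgt :=
  List.isChain_iff_pairwise.1 hC.1

theorem chain_nodup (hC : IsVChain d v C) : C.Nodup :=
  (chain_pairwise hC).imp fun h => by rintro rfl; exact pgt_irrefl _ h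

theorem pw_trichotomy (hP : C.Pairwise pgt) (ha : a ∈ C) (hb : b ∈ C) :
    a = b ∨ pgt a b ∨ pgt b a := by
  induction C with
  | nil => cases ha
  | cons c l ih =>
    rcases List.mem_cons.1 ha with rfl | ha' <;> rcases List.mem_cons.1 hb with rfl | hb'
    · exact Or.inl rfl
    · exact Or.inr (Or.inl ((List.pairwise_cons.1 hP).1 _ hb'))
    · exact Or.inr (Or.inr ((List.pairwise_cons.1 hP).1 _ ha'))
    · exact ih (List.pairwise_cons.1 hP).2 ha' hb'

theorem on_facts (hC : IsVChain d v C) (ha : a ∈ C) :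
    a.2 < a.1 ∧ a.1 + a.2 ≤ 2 * d ∧ 1 ≤ a.2 ∧ a.1 ≤ 2 * d := by
  obtain ⟨h1, h2⟩ := hC.2 a ha
  obtain ⟨_, hr2d, hc1, hc2d, _, _, hcr⟩ := h1
  obtain ⟨_, _, _, _, _, _, hro⟩ := h2
  have hro' : a.1 < 2 * d + 1 - a.2 := hro
  exact ⟨hcr, by omega, hc1, hr2d⟩

theorem exists_succ_split (hP : C.Pairwise pgt) (ha : a ∈ C) (hb : b ∈ C)
    (hab : pgt a b) : ∃ s σ t, C = s ++ a :: σ :: t ∧ (σ = b ∨ pgt σ b) := by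
  obtain ⟨s, rest, rfl⟩ := List.append_of_mem ha
  have hb' : b ∈ rest := by
    rcases List.mem_append.1 hb with hbs | hbr
    · exact absurd ((List.pairwise_append.1 hP).2.2 b hbs a (List.mem_cons_self))
        (pgt_asymm hab)
    · rcases List.mem_cons.1 hbr with rfl | h
      · exact absurd hab (pgt_irrefl _)
      · exact h
  cases rest with
  | nil => cases hb'
  | cons σ t =>
    refine ⟨s, σ, t, rfl, ?_⟩
    rcases List.mem_cons.1 hb' with rfl | h
    · exact Or.inl rfl
    · refine Or.inr ?_
      have hp : (a :: σ :: t).Pairwise pgt := (List.pairwise_append.1 hP).2.1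
      exact (List.pairwise_cons.1 (List.pairwise_cons.1 hp).2).1 _ h

theorem exists_pred_split (hP : C.Pairwise pgt) (ha' : a' ∈ C) (ha : a ∈ C)
    (h : pgt a' a) : ∃ s σ t, C = s ++ σ :: a :: t ∧ (σ = a' ∨ pgt a' σ) := by
  obtain ⟨s, t, rfl⟩ := List.append_of_mem ha
  have ha's : a' ∈ s := by
    rcases List.mem_append.1 ha' with h' | h'
    · exact h'
    · rcases List.mem_cons.1 h' with rfl | h''
      · exact absurd h (pgt_irrefl _)
      · exfalso
        have hp : (a :: t).Pairwise pgt := (List.pairwise_append.1 hP).2.1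
        exact pgt_asymm h ((List.pairwise_cons.1 hp).1 _ h'')
  rcases List.eq_nil_or_concat s with rfl | ⟨s', σ, rfl⟩
  · cases ha's
  · rw [List.concat_eq_append] at ha's hP ⊢
    refine ⟨s', σ, t, by simp, ?_⟩
    rcases List.mem_append.1 ha's with h' | h'
    · refine Or.inr ?_
      have : ∀ x ∈ s' ++ [σ], ∀ y ∈ a :: t, pgt x y := (List.pairwise_append.1 hP).2.2
      have hp2 : (s' ++ [σ]).Pairwise pgt := (List.pairwise_append.1 hP).1
      exact (List.pairwise_append.1 hp2).2.2 a' h' σ (List.mem_singleton_self _)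
    · rcases List.mem_cons.1 h' with rfl | h''
      · exact Or.inl rfl
      · cases h''

/-! ### typeOf lemmas -/

theorem typeOf_eq_of_find {g : List (ℕ × ℕ)}
    (hf : (components d C).find? (fun g => decide (a ∈ g)) = some g) :
    typeOf d C a = if g.getLast? = some a ∧ Odd g.length then
      (if star d a.1 < a.1 then VType.H else VType.S) else VType.V := by
  unfold typeOf
  rw [hf]

theorem typeOf_S_row (h : typeOf d C a = VType.S) : ¬ star d a.1 < a.1 := by
  cases hf : (components d C).find? (fun g => decide (a ∈ g)) with
  | none => unfold typeOf at h; rw [hf] at h; cases h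
  | some g =>
    rw [typeOf_eq_of_find hf] at h
    by_cases h1 : g.getLast? = some a ∧ Odd g.length
    · rw [if_pos h1] at h
      by_cases h2 : star d a.1 < a.1
      · rw [if_pos h2] at h; cases h
      · exact h2
    · rw [if_neg h1] at h; cases h

theorem typeOf_H_data (h : typeOf d C a = VType.H) :
    star d a.1 < a.1 ∧ ∃ g, (components d C).find? (fun g => decide (a ∈ g)) = some g ∧
      a ∈ g ∧ g ∈ components d C ∧ g.getLast? = some a ∧ Odd g.length := by
  cases hf : (components d C).find? (fun g => decide (a ∈ g)) with
  | none => unfold typeOf at h; rw [hf] at h; cases h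
  | some g =>
    rw [typeOf_eq_of_find hf] at h
    by_cases h1 : g.getLast? = some a ∧ Odd g.length
    · rw [if_pos h1] at h
      by_cases h2 : star d a.1 < a.1
      · have hag : a ∈ g := by simpa using List.find?_some hf
        exact ⟨h2, g, rfl, hag, List.mem_of_find?_eq_some hf, h1.1, h1.2⟩
      · rw [if_neg h2] at h; cases h
    · rw [if_neg h1] at h; cases h

theorem typeOf_ne_V (hC : IsVChain d v C) (ha : a ∈ C)
    (hprev : ∀ s σ t, C = s ++ σ :: a :: t → ¬ Connected d σ a)
    (hnext : ∀ s σ t, C = s ++ a :: σ :: t → ¬ Connected d a σ) :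
    typeOf d C a ≠ VType.V := by
  have hex : ∃ g ∈ components d C, a ∈ g := by
    rw [← List.mem_flatten]
    rw [comps_flatten]
    exact ha
  obtain ⟨g, hg, hag⟩ := hex
  have hfind : ∃ g₀, (components d C).find? (fun g => decide (a ∈ g)) = some g₀ := by
    rw [← Option.isSome_iff_exists, List.find?_isSome]
    exact ⟨g, hg, by simpa⟩
  obtain ⟨g₀, hf⟩ := hfind
  have hag₀ : a ∈ g₀ := by simpa using List.find?_some hf
  have hg₀ : g₀ ∈ components d C := List.mem_of_find?_eq_some hf
  obtain ⟨u, w, hgw⟩ := List.append_of_mem hag₀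
  have hginf : g₀ <:+: C := by
    have := List.infix_of_mem_flatten hg₀
    rwa [comps_flatten] at this
  have hchg : Chain' (fun x y => Connected d x y) g₀ := (comps_groups hg₀).2
  have hu : u = [] := by
    rcases List.eq_nil_or_concat u with rfl | ⟨u', p, rfl⟩
    · rfl
    · exfalso
      have hinf2 : [p, a] <:+: g₀ := by
        refine ⟨u', w, ?_⟩
        rw [hgw]; simp
      have hcon : Connected d p a := by
        have := hchg.infix hinf2
        exact List.isChain_pair.1 this
      obtain ⟨s, t, hst⟩ := hinf2.trans hginf
      exact hprev s p t (by rw [← hst]; simp) hcon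
  subst hu
  simp only [List.nil_append] at hgw
  have hw : w = [] := by
    cases w with
    | nil => rfl
    | cons n w' =>
      exfalso
      have hinf2 : [a, n] <:+: g₀ := by
        refine ⟨[], w', ?_⟩
        rw [hgw]; simp
      have hcon : Connected d a n := by
        have := hchg.infix hinf2
        exact List.isChain_pair.1 this
      obtain ⟨s, t, hst⟩ := hinf2.trans hginf
      exact hnext s n t (by rw [← hst]; simp) hcon
  subst hw
  rw [typeOf_eq_of_find hf, hgw]
  have : Odd ([a] : List (ℕ × ℕ)).length := by simp
  rw [if_pos ⟨by simp, this⟩]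
  split <;> simp

theorem typeOf_H_next (hC : IsVChain d v C) {s t : List (ℕ × ℕ)} {σ : ℕ × ℕ}
    (h : typeOf d C a = VType.H) (hsplit : C = s ++ a :: σ :: t) :
    ¬ Connected d a σ := by
  obtain ⟨-, g, hf, hag, hg, hlast, -⟩ := typeOf_H_data h
  obtain ⟨p, q, hpq⟩ := List.append_of_mem hg
  have hfl : (p ++ g :: q).flatten = C := by rw [← hpq]; exact comps_flatten _ _
  obtain ⟨g', rfl⟩ := List.getLast?_eq_some_iff.1 hlast
  have hnd : C.Nodup := chain_nodup hC
  cases q with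
  | nil =>
    exfalso
    have h1 : C.getLast? = some a := by
      rw [← hfl]; simp
    rw [hsplit] at h1
    have h2 : (σ :: t).getLast? = some a := by
      obtain ⟨z, hz⟩ := Option.isSome_iff_exists.1
        (show (σ :: t).getLast?.isSome by rw [List.getLast?_isSome]; simp)
      rw [show s ++ a :: σ :: t = (s ++ [a]) ++ σ :: t by simp, List.getLast?_append, hz] at h1
      simp only [Option.some_or] at h1
      rw [hz, h1]
    have h4 : a ∈ σ :: t := List.mem_of_getLast? h2
    have h5 : (a :: σ :: t).Nodup := (hsplit ▸ hnd).sublist (List.sublist_append_right _ _)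
    exact (List.nodup_cons.1 h5).1 h4
  | cons h' q' =>
    have hh'mem : h' ∈ components d C := by
      rw [hpq]; exact List.mem_append_right _ (by simp)
    obtain ⟨hne, -⟩ := comps_groups hh'mem
    obtain ⟨b, h'', rfl⟩ : ∃ b l, h' = b :: l := by
      cases h' with
      | nil => exact absurd rfl hne
      | cons b l => exact ⟨b, l, rfl⟩
    have hbnd := comps_bnd d C
    rw [hpq] at hbnd
    have hchsuf : Chain' (fun h h' => ∀ x y, h.getLast? = some x → h'.head? = some y →
        ¬ Connected d x y) ((g' ++ [a]) :: (b :: h'') :: q') :=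
      hbnd.infix ⟨p, [], by simp⟩
    have hnotc : ¬ Connected d a b :=
      (List.isChain_cons_cons.1 hchsuf).1 a b (by simp) rfl
    have hC2 : C = (p.flatten ++ g') ++ a :: (b :: (h'' ++ q'.flatten)) := by
      rw [← hfl]; simp
    have := nodup_split_unique (s₁ := s) (t₁ := σ :: t) (s₂ := p.flatten ++ g')
      (t₂ := b :: (h'' ++ q'.flatten)) (hsplit ▸ hnd)
      (by rw [← hsplit, hC2])
    obtain ⟨-, h6⟩ := this
    injection h6 with h7 h8
    subst h7
    exact hnotc

/-! ### derived type lemmas -/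

theorem S_row_le (hC : IsVChain d v C) (ha : a ∈ C) (h : typeOf d C a = VType.S) :
    a.1 ≤ d := by
  have h1 := typeOf_S_row h
  have h2 := on_facts hC ha
  have e : star d a.1 = 2 * d + 1 - a.1 := rfl
  omega

theorem H_row_gt (h : typeOf d C a = VType.H) : d < a.1 := by
  have h1 := (typeOf_H_data h).1
  have e : star d a.1 = 2 * d + 1 - a.1 := rfl
  omega

theorem noVH_after_S (hC : IsVChain d v C) (ha' : a' ∈ C) (ha : a ∈ C)
    (h : pgt a' a) (hS : typeOf d C a' = VType.S) : typeOf d C a = VType.S := by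
  have hP := chain_pairwise hC
  have hrow' : a'.1 ≤ d := S_row_le hC ha' hS
  have hrowa : a.1 < a'.1 := h.1
  cases hT : typeOf d C a with
  | S => rfl
  | H => exact absurd (H_row_gt hT) (by omega)
  | V =>
    exfalso
    refine typeOf_ne_V hC ha ?_ ?_ hT
    · intro s σ t hsp hcon
      have hmem : a' ∈ s ++ σ :: a :: t := hsp ▸ ha'
      have hrel : a' = σ ∨ pgt a' σ := by
        rcases List.mem_append.1 hmem with h1 | h1
        · exact Or.inr ((List.pairwise_append.1 (hsp ▸ hP)).2.2 a' h1 σ (by simp))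
        · rcases List.mem_cons.1 h1 with rfl | h2
          · exact Or.inl rfl
          · rcases List.mem_cons.1 h2 with rfl | h3
            · exact absurd h (pgt_irrefl _)
            · exfalso
              have hp2 : (σ :: a :: t).Pairwise pgt := (List.pairwise_append.1 (hsp ▸ hP)).2.1
              exact pgt_asymm h ((List.pairwise_cons.1 (List.pairwise_cons.1 hp2).2).1 _ h3)
      have hσd : σ.1 ≤ d := by
        rcases hrel with rfl | hh
        · exact hrow'
        · have := hh.1; omega
      have hc2 : star d σ.1 < a.1 := hcon.2
      have e : star d σ.1 = 2 * d + 1 - σ.1 := rfl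
      omega
    · intro s σ t hsp hcon
      have hσa : pgt a σ := by
        have hp2 : (a :: σ :: t).Pairwise pgt := (List.pairwise_append.1 (hsp ▸ hP)).2.1
        exact (List.pairwise_cons.1 hp2).1 σ (by simp)
      have hc2 : star d a.1 < σ.1 := hcon.2
      have e : star d a.1 = 2 * d + 1 - a.1 := rfl
      have := hσa.1
      omega

/-! ### membership in `𝔖_C` -/

theorem mem_listsum {β : Type*} [DecidableEq β] {l : List (Multiset β)} {x : β} :
    x ∈ l.sum ↔ ∃ m ∈ l, x ∈ m := by
  induction l with
  | nil => simp
  | cons m l ih => simp [ih]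

theorem mem_SC {x : ℕ × ℕ} : x ∈ SC d C ↔ ∃ a ∈ C, x ∈ SCa d C a := by
  unfold SC
  rw [mem_listsum]
  constructor
  · rintro ⟨m, hm, hx⟩
    obtain ⟨a, ha, rfl⟩ := List.mem_map.1 hm
    exact ⟨a, ha, hx⟩
  · rintro ⟨a, ha, hx⟩
    exact ⟨SCa d C a, List.mem_map.2 ⟨a, ha, rfl⟩, hx⟩

theorem SCa_mem_cases {x : ℕ × ℕ} (h : x ∈ SCa d C a) :
    (typeOf d C a = VType.V ∧ x = pv d a) ∨
    (typeOf d C a = VType.H ∧ (x = pv d a ∨ x = ph d a)) ∨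
    (typeOf d C a = VType.S ∧ (x = a ∨ x = hash d a)) := by
  unfold SCa at h
  cases hT : typeOf d C a <;> rw [hT] at h <;> simp at h <;> tauto

theorem qCa_of_S (h : typeOf d C a = VType.S) : qCa d C a = a := by
  unfold qCa; rw [h]

theorem qCa_of_ne_S (h : typeOf d C a ≠ VType.S) : qCa d C a = pv d a := by
  unfold qCa
  cases hT : typeOf d C a with
  | S => exact absurd hT h
  | V => rfl
  | H => rfl

theorem qCa_snd : (qCa d C a).2 = a.2 := by
  unfold qCa
  cases typeOf d C a <;> rfl

theorem qCa_mem : qCa d C a ∈ SCa d C a := by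
  unfold qCa SCa
  cases typeOf d C a <;> simp

theorem qCa_mem_SC (ha : a ∈ C) : qCa d C a ∈ SC d C :=
  mem_SC.2 ⟨a, ha, qCa_mem⟩

/-! ### the comparability lemmas -/

theorem hash_not_above (hC : IsVChain d v C) (hγ : γ ∈ C) (hb : b ∈ C)
    (hSb : typeOf d C b = VType.S) : ¬ pgt (hash d b) (qCa d C γ) := by
  intro hp
  have h2 : (hash d b).2 < (qCa d C γ).2 := hp.2
  rw [qCa_snd] at h2
  have e : (hash d b).2 = 2 * d + 1 - b.1 := rfl
  have h3 := S_row_le hC hb hSb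
  have h4 := on_facts hC hγ
  omega

theorem gamma_S_of_Skind (hC : IsVChain d v C) (hγ : γ ∈ C) (ha' : a' ∈ C)
    (hS : typeOf d C a' = VType.S) (hp : pgt a' (qCa d C γ)) :
    typeOf d C γ = VType.S := by
  by_contra hne
  rw [qCa_of_ne_S hne] at hp
  have h1 : (pv d γ).1 < a'.1 := hp.1
  have e : (pv d γ).1 = 2 * d + 1 - γ.2 := rfl
  have h2 := on_facts hC hγ
  have h3 := S_row_le hC ha' hS
  omega

theorem diag_comp {m m' : ℕ} (h2 : m ≤ 2 * d) (h2' : m' ≤ 2 * d) :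
    ((star d m, m) : ℕ × ℕ) = (star d m', m') ∨
      pgt (star d m, m) (star d m', m') ∨ pgt (star d m', m') (star d m, m) := by
  have e1 : star d m = 2 * d + 1 - m := rfl
  have e2 : star d m' = 2 * d + 1 - m' := rfl
  rcases lt_trichotomy m m' with h | h | h
  · exact Or.inr (Or.inl ⟨by omega, h⟩)
  · subst h; exact Or.inl rfl
  · exact Or.inr (Or.inr ⟨by omega, h⟩)

theorem star_star {k : ℕ} (h1 : 1 ≤ k) (h2 : k ≤ 2 * d) : star d (star d k) = k := by
  unfold OG.star; omega

theorem diag_form (hC : IsVChain d v C) (haC : a ∈ C)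
    (hx : (typeOf d C a ≠ VType.S ∧ b = pv d a) ∨ (typeOf d C a = VType.H ∧ b = ph d a)) :
    ∃ m, m ≤ 2 * d ∧ b = (star d m, m) := by
  have hf := on_facts hC haC
  rcases hx with ⟨-, rfl⟩ | ⟨-, rfl⟩
  · exact ⟨a.2, by omega, rfl⟩
  · refine ⟨star d a.1, ?_, ?_⟩
    · have e : star d a.1 = 2 * d + 1 - a.1 := rfl; omega
    · show (a.1, star d a.1) = _
      rw [star_star (by omega) (by omega)]

theorem diag_gt_S (hC : IsVChain d v C) {x : ℕ × ℕ}
    (hγ : γ ∈ C) (haC : a ∈ C) (ha'C : a' ∈ C)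
    (hx : (typeOf d C a ≠ VType.S ∧ x = pv d a) ∨ (typeOf d C a = VType.H ∧ x = ph d a))
    (hS' : typeOf d C a' = VType.S)
    (hxq : pgt x (qCa d C γ)) (hyq : pgt a' (qCa d C γ)) :
    pgt x a' := by
  have hP := chain_pairwise hC
  have hγS : typeOf d C γ = VType.S := gamma_S_of_Skind hC hγ ha'C hS' hyq
  rw [qCa_of_S hγS] at hxq hyq
  have hfa := on_facts hC haC
  have hfa' := on_facts hC ha'C
  have hfγ := on_facts hC hγ
  rcases hx with ⟨hVH, rfl⟩ | ⟨hH, rfl⟩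
  · rcases pw_trichotomy hP haC ha'C with rfl | hgt | hgt
    · exact absurd hS' hVH
    · refine ⟨?_, hgt.2⟩
      have e : (pv d a).1 = 2 * d + 1 - a.2 := rfl
      have := hgt.1
      omega
    · exact absurd (noVH_after_S hC ha'C haC hgt hS') hVH
  · have hrowa : d < a.1 := H_row_gt hH
    have hrowa' : a'.1 ≤ d := S_row_le hC ha'C hS'
    have haa' : pgt a a' := by
      rcases pw_trichotomy hP haC ha'C with rfl | hgt | hgt
      · rw [hS'] at hH; cases hH
      · exact hgt
      · exact absurd hgt.1 (by omega)
    have key : star d a.1 < a'.2 := by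
      by_contra hcon
      push_neg at hcon
      obtain ⟨s, σ, t, hsp, hσ⟩ := exists_succ_split hP haC ha'C haa'
      have hnc := typeOf_H_next hC hH hsp
      have hσ2 : σ.2 ≤ a'.2 := by rcases hσ with rfl | hh; exact le_rfl; exact le_of_lt hh.2
      have hσ1 : a'.1 ≤ σ.1 := by rcases hσ with rfl | hh; exact le_rfl; exact le_of_lt hh.1
      have h5 : star d a.1 < γ.2 := hxq.2
      have h7 : γ.1 < a'.1 := hyq.1
      exact hnc ⟨by omega, by omega⟩
    have e1 : (ph d a).1 = a.1 := rfl
    have e2 : (ph d a).2 = star d a.1 := rfl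
    have e3 : star d a.1 = 2 * d + 1 - a.1 := rfl
    exact ⟨by omega, by omega⟩

theorem U_total (hC : IsVChain d v C) (hγ : γ ∈ C) {x y : ℕ × ℕ}
    (hx : x ∈ SC d C) (hy : y ∈ SC d C)
    (hxq : pgt x (qCa d C γ)) (hyq : pgt y (qCa d C γ)) :
    x = y ∨ pgt x y ∨ pgt y x := by
  have hP := chain_pairwise hC
  obtain ⟨a, haC, hxa⟩ := mem_SC.1 hx
  obtain ⟨a', ha'C, hya⟩ := mem_SC.1 hy
  have hxk : ((typeOf d C a ≠ VType.S ∧ x = pv d a) ∨ (typeOf d C a = VType.H ∧ x = ph d a))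
      ∨ (typeOf d C a = VType.S ∧ x = a) := by
    rcases SCa_mem_cases hxa with ⟨hT, rfl⟩ | ⟨hT, rfl | rfl⟩ | ⟨hT, rfl | rfl⟩
    · exact Or.inl (Or.inl ⟨by rw [hT]; simp, rfl⟩)
    · exact Or.inl (Or.inl ⟨by rw [hT]; simp, rfl⟩)
    · exact Or.inl (Or.inr ⟨hT, rfl⟩)
    · exact Or.inr ⟨hT, rfl⟩
    · exact absurd hxq (hash_not_above hC hγ haC hT)
  have hyk : ((typeOf d C a' ≠ VType.S ∧ y = pv d a') ∨ (typeOf d C a' = VType.H ∧ y = ph d a'))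
      ∨ (typeOf d C a' = VType.S ∧ y = a') := by
    rcases SCa_mem_cases hya with ⟨hT, rfl⟩ | ⟨hT, rfl | rfl⟩ | ⟨hT, rfl | rfl⟩
    · exact Or.inl (Or.inl ⟨by rw [hT]; simp, rfl⟩)
    · exact Or.inl (Or.inl ⟨by rw [hT]; simp, rfl⟩)
    · exact Or.inl (Or.inr ⟨hT, rfl⟩)
    · exact Or.inr ⟨hT, rfl⟩
    · exact absurd hyq (hash_not_above hC hγ ha'C hT)
  rcases hxk with hxd | ⟨hTS, hxe⟩
  · rcases hyk with hyd | ⟨hTS', hye⟩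
    · -- both diagonal
      obtain ⟨m, hm2, rfl⟩ := diag_form hC haC hxd
      obtain ⟨m', hm2', rfl⟩ := diag_form hC ha'C hyd
      exact diag_comp hm2 hm2'
    · -- x diag, y S
      rw [hye] at hyq ⊢
      exact Or.inr (Or.inl (diag_gt_S hC hγ haC ha'C hxd hTS' hxq hyq))
  · rcases hyk with hyd | ⟨hTS', hye⟩
    · rw [hxe] at hxq ⊢
      exact Or.inr (Or.inr (diag_gt_S hC hγ ha'C haC hyd hTS hyq hxq))
    · rw [hxe, hye]
      rcases pw_trichotomy hP haC ha'C with h' | hgt | hgt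
      · exact Or.inl h'
      · exact Or.inr (Or.inl hgt)
      · exact Or.inr (Or.inr hgt)

theorem q_pgt (hC : IsVChain d v C) (hβ : β ∈ C) (hγ : γ ∈ C) (h : pgt β γ) :
    pgt (qCa d C β) (qCa d C γ) := by
  have h1 := on_facts hC hβ
  have h2 := on_facts hC hγ
  by_cases hSβ : typeOf d C β = VType.S
  · have hSγ := noVH_after_S hC hβ hγ h hSβ
    rw [qCa_of_S hSβ, qCa_of_S hSγ]
    exact h
  · rw [qCa_of_ne_S hSβ]
    by_cases hSγ : typeOf d C γ = VType.S
    · rw [qCa_of_S hSγ]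
      refine ⟨?_, h.2⟩
      have e : (pv d β).1 = 2 * d + 1 - β.2 := rfl
      have := h.1
      omega
    · rw [qCa_of_ne_S hSγ]
      refine ⟨?_, h.2⟩
      have e1 : (pv d β).1 = 2 * d + 1 - β.2 := rfl
      have e2 : (pv d γ).1 = 2 * d + 1 - γ.2 := rfl
      have := h.2
      omega

/-! ### building a maximal chain -/

theorem exists_chain_list (U : Finset (ℕ × ℕ))
    (htot : ∀ x ∈ U, ∀ y ∈ U, x = y ∨ pgt x y ∨ pgt y x) :
    ∃ L : List (ℕ × ℕ), L.Chain' pgt ∧ L.toFinset = U ∧ L.length = U.card := by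
  generalize hn : U.card = n
  induction n generalizing U with
  | zero =>
    refine ⟨[], by simp [List.Chain'], ?_, by simp⟩
    rw [Finset.card_eq_zero.1 hn]
    simp
  | succ n ih =>
    have hne : U.Nonempty := Finset.card_pos.1 (by omega)
    obtain ⟨x, hxU, hmax⟩ := Finset.exists_max_image U Prod.fst hne
    set U' := U.erase x with hU'
    have hcard : U'.card = n := by
      rw [hU', Finset.card_erase_of_mem hxU, hn]
      omega
    have htot' : ∀ a ∈ U', ∀ b ∈ U', a = b ∨ pgt a b ∨ pgt b a := fun a ha b hb =>
      htot a (Finset.mem_of_mem_erase ha) b (Finset.mem_of_mem_erase hb)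
    obtain ⟨L', hch', htf', hlen'⟩ := ih U' htot' hcard
    have hxgt : ∀ y ∈ U', pgt x y := by
      intro y hy
      have hyU := Finset.mem_of_mem_erase hy
      have hyx : y ≠ x := Finset.ne_of_mem_erase hy
      rcases htot x hxU y hyU with h | h | h
      · exact absurd h.symm hyx
      · exact h
      · exact absurd (hmax y hyU) (not_le.2 h.1)
    refine ⟨x :: L', ?_, ?_, ?_⟩
    · refine List.isChain_cons.2 ⟨?_, hch'⟩
      intro y hy
      refine hxgt y ?_
      rw [← htf']
      exact List.mem_toFinset.2 (List.mem_of_mem_head? hy)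
    · rw [List.toFinset_cons, htf', hU', Finset.insert_erase hxU]
    · simp [hlen', hcard, hn]

theorem pairwise_nodup {L : List (ℕ × ℕ)} (h : L.Pairwise pgt) : L.Nodup :=
  h.imp fun hab => by rintro rfl; exact pgt_irrefl _ hab

/-! ### the main theorem -/

theorem main (d : ℕ) (v : Finset ℕ) (hv : v ∈ Iset d)
    (C : List (ℕ × ℕ)) (hC : IsVChain d v C) (β γ : ℕ × ℕ)
    (hβ : β ∈ C) (hγ : γ ∈ C) (hbg : pgt β γ)
    (E : List (ℕ × ℕ)) (hE : IsChainIn (SC d C) E)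
    (hlast : E.getLast? = some (qCa d C γ)) (hlen : E.length = odepthC d C γ) :
    qCa d C β ∈ E := by
  classical
  set q : ℕ × ℕ := qCa d C γ with hq
  set U : Finset (ℕ × ℕ) := (SC d C).toFinset.filter (fun x => pgt x q) with hU
  -- upper bound for lengths of chains ending at q
  have hub : ∀ E' : List (ℕ × ℕ), IsChainIn (SC d C) E' → E'.getLast? = some q →
      E'.length ≤ U.card + 1 ∧ (E'.length = U.card + 1 →
        ∀ z ∈ E', z = q ∨ z ∈ U) := by
    intro E' hE' hlast'
    obtain ⟨F, rfl⟩ := List.getLast?_eq_some_iff.1 hlast'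
    have hpw : (F ++ [q]).Pairwise pgt := List.isChain_iff_pairwise.1 hE'.1
    have hFq : ∀ z ∈ F, pgt z q := fun z hz =>
      (List.pairwise_append.1 hpw).2.2 z hz q (by simp)
    have hFnd : F.Nodup := pairwise_nodup ((List.pairwise_append.1 hpw).1)
    have hFsub : F.toFinset ⊆ U := by
      intro z hz
      rw [List.mem_toFinset] at hz
      rw [hU, Finset.mem_filter, Multiset.mem_toFinset]
      exact ⟨hE'.2 z (List.mem_append_left _ hz), hFq z hz⟩
    have hlenF : F.length ≤ U.card := by
      rw [← List.toFinset_card_of_nodup hFnd]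
      exact Finset.card_le_card hFsub
    constructor
    · simp; omega
    · intro hlen' z hz
      have hFcard : F.toFinset.card = U.card := by
        rw [List.toFinset_card_of_nodup hFnd]
        simp at hlen'
        omega
      have hFeq : F.toFinset = U := Finset.eq_of_subset_of_card_le hFsub (le_of_eq hFcard.symm)
      rcases List.mem_append.1 hz with hzF | hzq
      · exact Or.inr (hFeq ▸ List.mem_toFinset.2 hzF)
      · exact Or.inl (by simpa using hzq)
  -- there is a chain of length U.card + 1
  have hqSC : q ∈ SC d C := qCa_mem_SC hγ
  have hexists : ∃ E' : List (ℕ × ℕ), IsChainIn (SC d C) E' ∧ E'.getLast? = some q ∧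
      E'.length = U.card + 1 := by
    have htot : ∀ x ∈ U, ∀ y ∈ U, x = y ∨ pgt x y ∨ pgt y x := by
      intro x hx y hy
      rw [hU, Finset.mem_filter, Multiset.mem_toFinset] at hx hy
      exact U_total hC hγ hx.1 hy.1 hx.2 hy.2
    obtain ⟨L, hch, htf, hlenL⟩ := exists_chain_list U htot
    refine ⟨L ++ [q], ⟨?_, ?_⟩, by simp, by simp [hlenL]⟩
    · rw [List.Chain', List.isChain_append]
      refine ⟨hch, by simp, ?_⟩
      intro x hx y hy
      simp only [List.head?_cons, Option.mem_def, Option.some.injEq] at hy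
      subst hy
      have hxL : x ∈ L := List.mem_of_getLast? hx
      have : x ∈ U := htf ▸ List.mem_toFinset.2 hxL
      rw [hU, Finset.mem_filter] at this
      exact this.2
    · intro z hz
      rcases List.mem_append.1 hz with hzL | hzq
      · have : z ∈ U := htf ▸ List.mem_toFinset.2 hzL
        rw [hU, Finset.mem_filter, Multiset.mem_toFinset] at this
        exact this.1
      · simp only [List.mem_singleton] at hzq
        subst hzq
        exact hqSC
  -- hence the depth equals U.card + 1
  have hdepth : odepthC d C γ = U.card + 1 := by
    unfold odepthC depth
    apply Nat.le_antisymm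
    · apply csSup_le
      · obtain ⟨E', h1, h2, h3⟩ := hexists
        exact ⟨U.card + 1, E', h1, h2, h3⟩
      · rintro k ⟨L, hL1, hL2, rfl⟩
        exact (hub L hL1 hL2).1
    · apply le_csSup
      · refine ⟨U.card + 1, ?_⟩
        rintro k ⟨L, hL1, hL2, rfl⟩
        exact (hub L hL1 hL2).1
      · obtain ⟨E', h1, h2, h3⟩ := hexists
        exact ⟨E', h1, h2, h3⟩
  -- E has maximal length, so it contains everything in U
  have hElen : E.length = U.card + 1 := by rw [hlen, hdepth]
  have hqβU : qCa d C β ∈ U := by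
    rw [hU, Finset.mem_filter, Multiset.mem_toFinset]
    exact ⟨qCa_mem_SC hβ, q_pgt hC hβ hγ hbg⟩
  -- decompose E
  obtain ⟨F, hF⟩ := List.getLast?_eq_some_iff.1 hlast
  subst hF
  have hpw : (F ++ [q]).Pairwise pgt := List.isChain_iff_pairwise.1 hE.1
  have hFnd : F.Nodup := pairwise_nodup ((List.pairwise_append.1 hpw).1)
  have hFsub : F.toFinset ⊆ U := by
    intro z hz
    rw [List.mem_toFinset] at hz
    rw [hU, Finset.mem_filter, Multiset.mem_toFinset]
    refine ⟨hE.2 z (List.mem_append_left _ hz), ?_⟩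
    exact (List.pairwise_append.1 hpw).2.2 z hz q (by simp)
  have hFcard : F.toFinset.card = U.card := by
    rw [List.toFinset_card_of_nodup hFnd]
    have : F.length + 1 = U.card + 1 := by simpa using hElen
    omega
  have hFeq : F.toFinset = U := Finset.eq_of_subset_of_card_le hFsub (le_of_eq hFcard.symm)
  have : qCa d C β ∈ F.toFinset := hFeq ▸ hqβU
  exact List.mem_append_left _ (List.mem_toFinset.1 this)

end OGaux


open OG in
/-- if `β > γ` in a `v`-chain `C` and `E` is a strictly decreasing chain
in `𝔖_C` with last element `q_{C,γ}` and length `odepth_C(γ)`, then `q_{C,β}` occurs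
in `E`. -/
theorem stmt9 (d : ℕ) (hd : 0 < d) (v : Finset ℕ) (hv : v ∈ Iset d)
    (C : List (ℕ × ℕ)) (hC : IsVChain d v C) (β γ : ℕ × ℕ)
    (hβ : β ∈ C) (hγ : γ ∈ C) (hbg : pgt β γ)
    (E : List (ℕ × ℕ)) (hE : IsChainIn (SC d C) E)
    (hlast : E.getLast? = some (qCa d C γ)) (hlen : E.length = odepthC d C γ) :
    qCa d C β ∈ E :=
  OGaux.main d v hv C hC β γ hβ hγ hbg E hE hlast hlen
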